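/- For the Tribonacci sequence and any k ≥ 2: 8·∑_{j=1}^{k} T(2j−1)² = T(2k)² + 6·T(2k−1)² − 2·T(2k−2)² − T(2k−4)² + 2. -/

import Mathlib

open Finset

theorem stmt13 (T : ℕ → ℤ) (h0 : T 0 = 0) (h1 : T 1 = 1) (h2 : T 2 = 1) (hT : ∀ n, 3 ≤ n → T n = T (n-1) + T (n-2) + T (n-3)) :
    ∀ k, 2 ≤ k → 8*∑ j ∈ Icc 1 k, (T (2*j-1))^2 = (T (2*k))^2 + 6*(T (2*k-1))^2 - 2*(T (2*k-2))^2 - (T (2*k-4))^2 + 2 := by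
  intro k hk
  induction k, hk using Nat.le_induction with
  | base =>
    have t3 : T 3 = 2 := by have := hT 3 (by norm_num); norm_num [h0, h1, h2] at this; linarith
    have t4 : T 4 = 4 := by have := hT 4 (by norm_num); norm_num [h1, h2, t3] at this; linarith
    norm_num [show Icc 1 2 = {1, 2} from rfl, h0, h1, h2, t3, t4]
  | succ k hk ih =>
    have e6 : T (2*k+2) = T (2*k+1) + T (2*k) + T (2*k-1) := by
      have := hT (2*k+2) (by omega)
      rwa [show 2*k+2-1 = 2*k+1 from by omega, show 2*k+2-2 = 2*k from by omega,
        show 2*k+2-3 = 2*k-1 from by omega] at this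
    have e5 : T (2*k+1) = T (2*k) + T (2*k-1) + T (2*k-2) := by
      have := hT (2*k+1) (by omega)
      rwa [show 2*k+1-1 = 2*k from by omega, show 2*k+1-2 = 2*k-1 from by omega,
        show 2*k+1-3 = 2*k-2 from by omega] at this
    have e4 : T (2*k) = T (2*k-1) + T (2*k-2) + T (2*k-3) := hT (2*k) (by omega)
    have e3 : T (2*k-1) = T (2*k-2) + T (2*k-3) + T (2*k-4) := by
      have := hT (2*k-1) (by omega)
      rwa [show 2*k-1-1 = 2*k-2 from by omega, show 2*k-1-2 = 2*k-3 from by omega,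
        show 2*k-1-3 = 2*k-4 from by omega] at this
    rw [Finset.sum_Icc_succ_top (by omega : 1 ≤ k+1),
      show 2*(k+1)-1 = 2*k+1 from by omega, show 2*(k+1) = 2*k+2 from by omega,
      show 2*k+2-2 = 2*k from by omega, show 2*k+2-4 = 2*k-2 from by omega,
      e6, e5, e4, e3]
    rw [e4, e3] at ih
    linear_combination ih
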